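/- Let m ≥ 2 and f = xz·((xz)^{m−1} + y^{2m−2}) in C[x,y,z], a polynomial of degree d = 2m. Then for every integer j with 1 ≤ j ≤ d − 3, the complex vector space { (a,b,c) ∈ AR(f)_j : a_x + b_y + c_z = 0 } has dimension ⌊(j+1)/2⌋. -/

import Mathlib

open MvPolynomial Finsupp

namespace Stmt17Aux

/-- substitute 0 for variable `i` -/
noncomputable def az (i : Fin 3) : MvPolynomial (Fin 3) ℂ →ₐ[ℂ] MvPolynomial (Fin 3) ℂ :=
  aeval (fun j => if j = i then 0 else X j)

lemma az_monomial (i : Fin 3) (e : Fin 3 →₀ ℕ) (c : ℂ) :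
    az i (monomial e c) = if e i = 0 then monomial e c else 0 := by
  rw [az, aeval_monomial]
  by_cases h : e i = 0
  · rw [if_pos h]
    have hi : i ∉ e.support := by simp [Finsupp.mem_support_iff, h]
    have h2 : (e.prod fun n k => (if n = i then (0:MvPolynomial (Fin 3) ℂ) else X n) ^ k)
        = e.prod fun n k => (X n) ^ k := by
      apply Finset.prod_congr rfl
      intro j hj
      have hji : j ≠ i := fun hji => hi (hji ▸ hj)
      simp only [if_neg hji]
    rw [h2, Finsupp.prod, prod_X_pow_eq_monomial, algebraMap_eq, C_mul_monomial, mul_one]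
  · rw [if_neg h]
    have hi : i ∈ e.support := Finsupp.mem_support_iff.mpr h
    rw [Finsupp.prod, Finset.prod_eq_zero hi (by rw [if_pos rfl]; exact zero_pow h), mul_zero]

lemma az_coeff (i : Fin 3) (p : MvPolynomial (Fin 3) ℂ) (d : Fin 3 →₀ ℕ) (hd : d i = 0) :
    coeff d (az i p) = coeff d p := by
  conv_lhs => rw [p.as_sum, map_sum]
  rw [coeff_sum]
  rw [Finset.sum_eq_single d]
  · rw [az_monomial, if_pos hd, coeff_monomial, if_pos rfl]
  · intro e he hne
    rw [az_monomial]
    by_cases h : e i = 0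
    · rw [if_pos h, coeff_monomial, if_neg hne]
    · rw [if_neg h, coeff_zero]
  · intro h
    rw [az_monomial, if_pos hd, coeff_monomial, if_pos rfl]
    exact MvPolynomial.notMem_support_iff.mp h

lemma X_dvd_iff_az (i : Fin 3) (p : MvPolynomial (Fin 3) ℂ) : X i ∣ p ↔ az i p = 0 := by
  constructor
  · rintro ⟨q, rfl⟩
    rw [map_mul]
    have : az i (X i) = 0 := by rw [az, aeval_X, if_pos rfl]
    rw [this, zero_mul]
  · intro h
    rw [X_dvd_iff_modMonomial_eq_zero]
    rw [MvPolynomial.eq_zero_iff]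
    intro d
    by_cases hle : Finsupp.single i 1 ≤ d
    · exact coeff_modMonomial_of_le _ hle
    · rw [coeff_modMonomial_of_not_le _ hle]
      have hdi : d i = 0 := by
        rw [Finsupp.single_le_iff] at hle; omega
      rw [← az_coeff i p d hdi, h, coeff_zero]

lemma prime_X3 (i : Fin 3) : Prime (X i : MvPolynomial (Fin 3) ℂ) := by
  refine ⟨X_ne_zero i, ?_, ?_⟩
  · intro hu
    have h1 : (X i : MvPolynomial (Fin 3) ℂ) ∣ 1 := hu.dvd
    rw [X_dvd_iff_az, map_one] at h1
    exact one_ne_zero h1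
  · intro p q hpq
    rw [X_dvd_iff_az, map_mul] at hpq
    rcases mul_eq_zero.mp hpq with h | h
    · exact Or.inl ((X_dvd_iff_az i p).mpr h)
    · exact Or.inr ((X_dvd_iff_az i q).mpr h)

lemma Xmul_pderiv_monomial (i : Fin 3) (e : Fin 3 →₀ ℕ) (c : ℂ) :
    X i * pderiv i (monomial e c) = monomial e (c * e i) := by
  rw [pderiv_monomial]
  by_cases h : e i = 0
  · rw [h]
    simp
  · have hle : Finsupp.single i 1 ≤ e := by
      rw [Finsupp.single_le_iff]; omega
    have hX : (X i : MvPolynomial (Fin 3) ℂ) = monomial (Finsupp.single i 1) 1 := by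
      rw [← X_pow_eq_monomial, pow_one]
    rw [hX, monomial_mul, one_mul, add_tsub_cancel_of_le hle]

lemma coeff_Xmul_pderiv (i : Fin 3) (h : MvPolynomial (Fin 3) ℂ) (d : Fin 3 →₀ ℕ) :
    coeff d (X i * pderiv i h) = coeff d h * d i := by
  induction h using MvPolynomial.induction_on' with
  | monomial e c =>
    rw [Xmul_pderiv_monomial, coeff_monomial, coeff_monomial]
    by_cases h : e = d
    · subst h; rw [if_pos rfl, if_pos rfl]
    · rw [if_neg h, if_neg h, zero_mul]
  | add p q hp hq =>
    rw [map_add, mul_add, coeff_add, coeff_add, add_mul, hp, hq]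

lemma weight_one_eq (dd : Fin 3 →₀ ℕ) :
    (Finsupp.weight (1 : Fin 3 → ℕ)) dd = dd 0 + dd 1 + dd 2 := by
  have h1 : Finsupp.degree dd = dd 0 + dd 1 + dd 2 := by
    show ∑ i ∈ dd.support, dd i = _
    rw [Finset.sum_subset (Finset.subset_univ dd.support)
      (fun x _ hx => Finsupp.notMem_support_iff.mp hx)]
    exact Fin.sum_univ_three _
  rw [← h1, Finsupp.degree_eq_weight_one]
  rfl

lemma isHomog_iff' (p : MvPolynomial (Fin 3) ℂ) (n : ℕ) :
    IsHomogeneous p n ↔ ∀ d : Fin 3 →₀ ℕ, coeff d p ≠ 0 → d 0 + d 1 + d 2 = n := by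
  constructor
  · intro H d hd
    have := H hd
    rwa [weight_one_eq] at this
  · intro H d hd
    rw [weight_one_eq]
    exact H d hd

noncomputable def Pk (k : ℕ) : MvPolynomial (Fin 3) ℂ :=
  ((k : MvPolynomial (Fin 3) ℂ) + 2) * (X 0 * X 2) ^ (k + 1) + X 1 ^ (2 * k + 2)

lemma hfx (k : ℕ) :
    pderiv 0 (X 0 * X 2 * ((X 0 * X 2) ^ (k + 1) + X 1 ^ (2 * k + 2)) : MvPolynomial (Fin 3) ℂ)
      = X 2 * Pk k := by
  have h1 : ((2:Fin 3) : Fin 3) ≠ 0 := by decide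
  have h2 : ((1:Fin 3) : Fin 3) ≠ 0 := by decide
  simp only [pderiv_mul, pderiv_pow, pderiv_X_self, pderiv_X_of_ne h1, pderiv_X_of_ne h2,
    map_add, Pk, Nat.add_sub_cancel, Nat.cast_add, Nat.cast_mul, Nat.cast_ofNat, Nat.cast_one]
  ring

lemma hfz (k : ℕ) :
    pderiv 2 (X 0 * X 2 * ((X 0 * X 2) ^ (k + 1) + X 1 ^ (2 * k + 2)) : MvPolynomial (Fin 3) ℂ)
      = X 0 * Pk k := by
  have h1 : ((0:Fin 3) : Fin 3) ≠ 2 := by decide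
  have h2 : ((1:Fin 3) : Fin 3) ≠ 2 := by decide
  simp only [pderiv_mul, pderiv_pow, pderiv_X_self, pderiv_X_of_ne h1, pderiv_X_of_ne h2,
    map_add, Pk, Nat.add_sub_cancel, Nat.cast_add, Nat.cast_mul, Nat.cast_ofNat, Nat.cast_one]
  ring

lemma hfy (k : ℕ) :
    pderiv 1 (X 0 * X 2 * ((X 0 * X 2) ^ (k + 1) + X 1 ^ (2 * k + 2)) : MvPolynomial (Fin 3) ℂ)
      = ((2*k+2 : ℕ) : MvPolynomial (Fin 3) ℂ) * (X 0 * (X 2 * X 1 ^ (2 * k + 1))) := by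
  have h1 : ((0:Fin 3) : Fin 3) ≠ 1 := by decide
  have h2 : ((2:Fin 3) : Fin 3) ≠ 1 := by decide
  have e : 2*k+2-1 = 2*k+1 := by omega
  simp only [pderiv_mul, pderiv_pow, pderiv_X_self, pderiv_X_of_ne h1, pderiv_X_of_ne h2,
    map_add, e, Nat.cast_add, Nat.cast_mul, Nat.cast_ofNat, Nat.cast_one]
  ring

lemma natCast_eq_C (n : ℕ) : ((n : MvPolynomial (Fin 3) ℂ)) = C ((n : ℂ)) := by
  rw [C_eq_coe_nat]

lemma Pk_homog (k : ℕ) : IsHomogeneous (Pk k) (2 * k + 2) := by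
  have hX : IsHomogeneous (X 0 * X 2 : MvPolynomial (Fin 3) ℂ) 2 := by
    have h := (isHomogeneous_X ℂ (0 : Fin 3)).mul (isHomogeneous_X ℂ (2 : Fin 3))
    exact h
  have hpow : IsHomogeneous ((X 0 * X 2 : MvPolynomial (Fin 3) ℂ) ^ (k+1)) (2 * k + 2) := by
    have h := hX.pow (k + 1)
    have e : 2 * (k + 1) = 2 * k + 2 := by omega
    rwa [e] at h
  have hC : ((k : MvPolynomial (Fin 3) ℂ) + 2) = C ((k : ℂ) + 2) := by
    rw [map_add, ← natCast_eq_C, map_ofNat]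
  have h1 : IsHomogeneous (((k : MvPolynomial (Fin 3) ℂ) + 2) * (X 0 * X 2) ^ (k+1)) (2 * k + 2) := by
    rw [hC]
    exact hpow.C_mul _
  exact h1.add (isHomogeneous_X_pow 1 (2 * k + 2))

lemma Pk_az0 (k : ℕ) : az 0 (Pk k) = X 1 ^ (2 * k + 2) := by
  have h1 : az 0 (X 0 : MvPolynomial (Fin 3) ℂ) = 0 := by rw [az, aeval_X, if_pos rfl]
  have h2 : az 0 (X 1 : MvPolynomial (Fin 3) ℂ) = X 1 := by
    rw [az, aeval_X, if_neg (by decide)]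
  simp only [Pk, map_add, map_mul, map_pow, map_natCast, map_ofNat, h1, h2, zero_mul,
    zero_pow (Nat.succ_ne_zero k), mul_zero, zero_add]

lemma Pk_az2 (k : ℕ) : az 2 (Pk k) = X 1 ^ (2 * k + 2) := by
  have h1 : az 2 (X 2 : MvPolynomial (Fin 3) ℂ) = 0 := by rw [az, aeval_X, if_pos rfl]
  have h2 : az 2 (X 1 : MvPolynomial (Fin 3) ℂ) = X 1 := by
    rw [az, aeval_X, if_neg (by decide)]
  simp only [Pk, map_add, map_mul, map_pow, map_natCast, map_ofNat, h1, h2,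
    zero_pow (Nat.succ_ne_zero k), mul_zero, zero_add]

lemma Pk_az1 (k : ℕ) : az 1 (Pk k) = ((k : MvPolynomial (Fin 3) ℂ) + 2) * (X 0 * X 2) ^ (k + 1) := by
  have h0 : az 1 (X 0 : MvPolynomial (Fin 3) ℂ) = X 0 := by
    rw [az, aeval_X, if_neg (by decide)]
  have h2 : az 1 (X 2 : MvPolynomial (Fin 3) ℂ) = X 2 := by
    rw [az, aeval_X, if_neg (by decide)]
  have h1 : az 1 (X 1 : MvPolynomial (Fin 3) ℂ) = 0 := by rw [az, aeval_X, if_pos rfl]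
  simp only [Pk, map_add, map_mul, map_pow, map_natCast, map_ofNat, h0, h1, h2,
    zero_pow (by omega : 2 * k + 2 ≠ 0), add_zero]

lemma X_not_dvd_Pk (k : ℕ) (i : Fin 3) : ¬ X i ∣ Pk k := by
  have h0 : az 0 (Pk k) ≠ 0 := by
    rw [Pk_az0]; exact pow_ne_zero _ (X_ne_zero 1)
  have h1 : az 1 (Pk k) ≠ 0 := by
    rw [Pk_az1]
    apply mul_ne_zero
    · have hC2 : ((k : MvPolynomial (Fin 3) ℂ) + 2) = C ((k:ℂ)+2) := by
        rw [map_add, ← natCast_eq_C, map_ofNat]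
      rw [hC2]
      intro h
      have h' : ((k:ℂ)+2) = 0 := MvPolynomial.C_injective (Fin 3) ℂ (h.trans (map_zero C).symm)
      have h'' : ((k:ℂ)+2) ≠ 0 := by
        have hne : ((k+2:ℕ):ℂ) ≠ 0 := Nat.cast_ne_zero.mpr (by omega)
        push_cast at hne
        exact hne
      exact h'' h'
    · exact pow_ne_zero _ (mul_ne_zero (X_ne_zero 0) (X_ne_zero 2))
  have h2 : az 2 (Pk k) ≠ 0 := by
    rw [Pk_az2]; exact pow_ne_zero _ (X_ne_zero 1)
  rw [X_dvd_iff_az]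
  fin_cases i
  · exact h0
  · exact h1
  · exact h2

lemma Pk_ne (k : ℕ) : Pk k ≠ 0 := by
  intro h
  exact X_not_dvd_Pk k 0 (h ▸ dvd_zero _)

lemma relPrime_Pk (k : ℕ) (i : Fin 3) : IsRelPrime (Pk k) (X i) :=
  (((prime_X3 i).irreducible.isRelPrime_iff_not_dvd).mpr (X_not_dvd_Pk k i)).symm

lemma Pk_dvd_cancel (k : ℕ) {v : MvPolynomial (Fin 3) ℂ}
    (hdvd : Pk k ∣ X 0 * (X 2 * (X 1 ^ (2 * k + 1) * v))) : Pk k ∣ v := by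
  have h1 := (relPrime_Pk k 0).dvd_of_dvd_mul_left hdvd
  have h2 := (relPrime_Pk k 2).dvd_of_dvd_mul_left h1
  exact ((relPrime_Pk k 1).pow_right.dvd_of_dvd_mul_left h2)

lemma X_mul_monomial3 (i : Fin 3) (e : Fin 3 →₀ ℕ) (c : ℂ) :
    X i * monomial e c = monomial (Finsupp.single i 1 + e) c := by
  have hX : (X i : MvPolynomial (Fin 3) ℂ) = monomial (Finsupp.single i 1) 1 := by
    rw [← X_pow_eq_monomial, pow_one]
  rw [hX, monomial_mul, one_mul]

lemma isHomog_monomial' (dd : Fin 3 →₀ ℕ) (c : ℂ) (n : ℕ) (h : dd 0 + dd 1 + dd 2 = n) :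
    IsHomogeneous (monomial dd c) n := by
  rw [isHomog_iff']
  intro d hd
  rw [coeff_monomial] at hd
  by_cases hed : dd = d
  · subst hed; exact h
  · rw [if_neg hed] at hd; exact absurd rfl hd

lemma isHomog_of_X_mul {i : Fin 3} {h : MvPolynomial (Fin 3) ℂ} {n : ℕ}
    (H : IsHomogeneous (X i * h) (n + 1)) : IsHomogeneous h n := by
  rw [isHomog_iff'] at H ⊢
  intro d hd
  have h2 := H (Finsupp.single i 1 + d) (by rwa [coeff_X_mul])
  fin_cases i <;>
    simp only [Finsupp.add_apply, Finsupp.single_apply] at h2 <;>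
    split_ifs at h2 <;> omega

lemma homog_low_eq_zero (k j : ℕ) (hj : j < 2 * k + 2) {v : MvPolynomial (Fin 3) ℂ}
    (hhom : IsHomogeneous v j) (hdvd : Pk k ∣ v) : v = 0 := by
  obtain ⟨t, rfl⟩ := hdvd
  have h1 : homogeneousComponent j (Pk k * t) = Pk k * t := by
    rw [homogeneousComponent_of_mem hhom, if_pos rfl]
  rw [← h1]
  have h2 : Pk k * t = ∑ i ∈ Finset.range (t.totalDegree + 1), Pk k * homogeneousComponent i t := by
    rw [← Finset.mul_sum, sum_homogeneousComponent]
  rw [h2, map_sum]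
  apply Finset.sum_eq_zero
  intro i _
  have hmem : Pk k * homogeneousComponent i t ∈ homogeneousSubmodule (Fin 3) ℂ (2 * k + 2 + i) :=
    (Pk_homog k).mul (homogeneousComponent_isHomogeneous i t)
  rw [homogeneousComponent_of_mem hmem, if_neg (by omega)]

noncomputable def Phi : MvPolynomial (Fin 3) ℂ →ₗ[ℂ] (Fin 3 → MvPolynomial (Fin 3) ℂ) where
  toFun p := ![X 0 * p, 0, -(X 2 * p)]
  map_add' p q := by
    funext i
    fin_cases i <;> simp <;> ring
  map_smul' c p := by
    funext i
    fin_cases i <;> simp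

@[simp] lemma Phi_0 (p : MvPolynomial (Fin 3) ℂ) : Phi p 0 = X 0 * p := rfl
@[simp] lemma Phi_1 (p : MvPolynomial (Fin 3) ℂ) : Phi p 1 = 0 := rfl
@[simp] lemma Phi_2 (p : MvPolynomial (Fin 3) ℂ) : Phi p 2 = -(X 2 * p) := rfl

noncomputable def ee (j α : ℕ) : Fin 3 →₀ ℕ :=
  Finsupp.single 0 α + Finsupp.single 1 (j - 1 - 2 * α) + Finsupp.single 2 α

lemma triple_apply0 (a b c : ℕ) :
    (Finsupp.single (0:Fin 3) a + Finsupp.single 1 b + Finsupp.single 2 c : Fin 3 →₀ ℕ) 0 = a := by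
  simp [Finsupp.add_apply, Finsupp.single_apply]

lemma triple_apply1 (a b c : ℕ) :
    (Finsupp.single (0:Fin 3) a + Finsupp.single 1 b + Finsupp.single 2 c : Fin 3 →₀ ℕ) 1 = b := by
  simp [Finsupp.add_apply, Finsupp.single_apply]

lemma triple_apply2 (a b c : ℕ) :
    (Finsupp.single (0:Fin 3) a + Finsupp.single 1 b + Finsupp.single 2 c : Fin 3 →₀ ℕ) 2 = c := by
  simp [Finsupp.add_apply, Finsupp.single_apply]

lemma ee_apply0 (j α : ℕ) : ee j α 0 = α := triple_apply0 _ _ _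
lemma ee_apply1 (j α : ℕ) : ee j α 1 = j - 1 - 2 * α := triple_apply1 _ _ _
lemma ee_apply2 (j α : ℕ) : ee j α 2 = α := triple_apply2 _ _ _

lemma finsupp3_eq (dd : Fin 3 →₀ ℕ) :
    Finsupp.single 0 (dd 0) + Finsupp.single 1 (dd 1) + Finsupp.single 2 (dd 2) = dd := by
  ext i
  fin_cases i
  · exact triple_apply0 _ _ _
  · exact triple_apply1 _ _ _
  · exact triple_apply2 _ _ _

noncomputable def gg (j α : ℕ) : MvPolynomial (Fin 3) ℂ := monomial (ee j α) 1

end Stmt17Aux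

/-- The ℂ-linear Jacobian map sending `(a,b,c)` to `a·f_x + b·f_y + c·f_z`. -/
noncomputable def jacC (f : MvPolynomial (Fin 3) ℂ) :
    (Fin 3 → MvPolynomial (Fin 3) ℂ) →ₗ[ℂ] MvPolynomial (Fin 3) ℂ where
  toFun v := ∑ i, v i * pderiv i f
  map_add' a b := by simp [add_mul, Finset.sum_add_distrib]
  map_smul' c a := by simp [Finset.smul_sum, smul_mul_assoc]

/-- The ℂ-linear divergence map sending `(a,b,c)` to `a_x + b_y + c_z`. -/
noncomputable def divC :
    (Fin 3 → MvPolynomial (Fin 3) ℂ) →ₗ[ℂ] MvPolynomial (Fin 3) ℂ where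
  toFun v := ∑ i, pderiv i (v i)
  map_add' a b := by simp [Finset.sum_add_distrib]
  map_smul' c a := by simp [Finset.smul_sum]

/-- The ℂ-vector space of Jacobian syzygies of `f` that are homogeneous of degree `j`
and are annihilated by the divergence map. -/
noncomputable def V (f : MvPolynomial (Fin 3) ℂ) (j : ℕ) :
    Submodule ℂ (Fin 3 → MvPolynomial (Fin 3) ℂ) :=
  (Submodule.pi Set.univ fun _ => homogeneousSubmodule (Fin 3) ℂ j) ⊓
    LinearMap.ker (jacC f) ⊓ LinearMap.ker divC

lemma jacC_apply' (f : MvPolynomial (Fin 3) ℂ) (v : Fin 3 → MvPolynomial (Fin 3) ℂ) :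
    jacC f v = v 0 * pderiv 0 f + v 1 * pderiv 1 f + v 2 * pderiv 2 f := by
  show ∑ i, v i * pderiv i f = _
  rw [Fin.sum_univ_three]

lemma divC_apply' (v : Fin 3 → MvPolynomial (Fin 3) ℂ) :
    divC v = pderiv 0 (v 0) + pderiv 1 (v 1) + pderiv 2 (v 2) := by
  show ∑ i, pderiv i (v i) = _
  rw [Fin.sum_univ_three]

theorem stmt17 (m d : ℕ) (hm : 2 ≤ m) (hd : d = 2 * m) :
    let f : MvPolynomial (Fin 3) ℂ := X 0 * X 2 * ((X 0 * X 2) ^ (m - 1) + X 1 ^ (2 * m - 2))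
    ∀ j : ℕ, 1 ≤ j → j ≤ d - 3 → Module.finrank ℂ (V f j) = (j + 1) / 2 := by
  intro f j hj1 hj2
  obtain ⟨k, rfl⟩ : ∃ k, m = k + 2 := ⟨m - 2, by omega⟩
  have hjk : j ≤ 2 * k + 1 := by omega
  have hf : f = X 0 * X 2 * ((X 0 * X 2) ^ (k + 1) + X 1 ^ (2 * k + 2)) := by
    show X 0 * X 2 * ((X 0 * X 2) ^ (k + 2 - 1) + X 1 ^ (2 * (k + 2) - 2)) =
      X 0 * X 2 * ((X 0 * X 2) ^ (k + 1) + X 1 ^ (2 * k + 2))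
    have e1 : k + 2 - 1 = k + 1 := by omega
    have e2 : 2 * (k + 2) - 2 = 2 * k + 2 := by omega
    rw [e1, e2]
  have hfx' : pderiv 0 f = X 2 * Stmt17Aux.Pk k := by rw [hf]; exact Stmt17Aux.hfx k
  have hfy' : pderiv 1 f
      = ((2 * k + 2 : ℕ) : MvPolynomial (Fin 3) ℂ) * (X 0 * (X 2 * X 1 ^ (2 * k + 1))) := by
    rw [hf]; exact Stmt17Aux.hfy k
  have hfz' : pderiv 2 f = X 0 * Stmt17Aux.Pk k := by rw [hf]; exact Stmt17Aux.hfz k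
  -- the spanning family
  have hGmem : ∀ α : Fin ((j + 1) / 2),
      Stmt17Aux.Phi (Stmt17Aux.gg j (α : ℕ)) ∈ V f j := by
    intro α
    have h2a : 2 * (α : ℕ) ≤ j - 1 := by have := α.isLt; omega
    have hg0 : Stmt17Aux.Phi (Stmt17Aux.gg j (α : ℕ)) 0
        = monomial (Finsupp.single 0 1 + Stmt17Aux.ee j (α : ℕ)) 1 := by
      rw [Stmt17Aux.Phi_0, Stmt17Aux.gg, Stmt17Aux.X_mul_monomial3]
    have hg2 : Stmt17Aux.Phi (Stmt17Aux.gg j (α : ℕ)) 2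
        = -(monomial (Finsupp.single 2 1 + Stmt17Aux.ee j (α : ℕ)) 1) := by
      rw [Stmt17Aux.Phi_2, Stmt17Aux.gg, Stmt17Aux.X_mul_monomial3]
    simp only [V, Submodule.mem_inf, Submodule.mem_pi, Set.mem_univ, forall_true_left,
      LinearMap.mem_ker, mem_homogeneousSubmodule]
    refine ⟨⟨?_, ?_⟩, ?_⟩
    · intro i
      fin_cases i
      · show (Stmt17Aux.Phi (Stmt17Aux.gg j (α : ℕ)) 0).IsHomogeneous j
        rw [hg0]
        apply Stmt17Aux.isHomog_monomial'
        simp only [Finsupp.add_apply, Stmt17Aux.ee_apply0, Stmt17Aux.ee_apply1,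
          Stmt17Aux.ee_apply2, Finsupp.single_apply]
        simp only [show ((0:Fin 3) = 1) = False from by simp, show ((0:Fin 3) = 2) = False from by simp,
          if_true, if_false, eq_self_iff_true]
        omega
      · show (Stmt17Aux.Phi (Stmt17Aux.gg j (α : ℕ)) 1).IsHomogeneous j
        rw [Stmt17Aux.Phi_1]
        exact isHomogeneous_zero _ _ _
      · show (Stmt17Aux.Phi (Stmt17Aux.gg j (α : ℕ)) 2).IsHomogeneous j
        rw [hg2]
        apply MvPolynomial.IsHomogeneous.neg
        apply Stmt17Aux.isHomog_monomial'
        simp only [Finsupp.add_apply, Stmt17Aux.ee_apply0, Stmt17Aux.ee_apply1,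
          Stmt17Aux.ee_apply2, Finsupp.single_apply]
        simp only [show ((2:Fin 3) = 0) = False from by simp, show ((2:Fin 3) = 1) = False from by simp,
          if_true, if_false, eq_self_iff_true]
        omega
    · rw [jacC_apply', hfx', hfy', hfz', Stmt17Aux.Phi_0, Stmt17Aux.Phi_1, Stmt17Aux.Phi_2]
      ring
    · rw [divC_apply', Stmt17Aux.Phi_0, Stmt17Aux.Phi_1, Stmt17Aux.Phi_2]
      rw [pderiv_mul, pderiv_X_self, map_neg, pderiv_mul, pderiv_X_self, map_zero]
      rw [Stmt17Aux.gg, Stmt17Aux.Xmul_pderiv_monomial, Stmt17Aux.Xmul_pderiv_monomial,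
        Stmt17Aux.ee_apply0, Stmt17Aux.ee_apply2]
      ring
  have hVspan : V f j
      = Submodule.span ℂ (Set.range (fun α : Fin ((j + 1) / 2) =>
          Stmt17Aux.Phi (Stmt17Aux.gg j (α : ℕ)))) := by
    apply le_antisymm
    · intro v hv
      simp only [V, Submodule.mem_inf, Submodule.mem_pi, Set.mem_univ, forall_true_left,
        LinearMap.mem_ker, mem_homogeneousSubmodule] at hv
      obtain ⟨⟨hvhom, hvjac⟩, hvdiv⟩ := hv
      have hvh0 := hvhom 0
      have hvh1 := hvhom 1
      rw [jacC_apply', hfx', hfy', hfz'] at hvjac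
      rw [divC_apply'] at hvdiv
      have hc : ((2 * k + 2 : ℕ) : MvPolynomial (Fin 3) ℂ)
          * C (((2 * k + 2 : ℕ) : ℂ))⁻¹ = 1 := by
        rw [Stmt17Aux.natCast_eq_C, ← map_mul,
          mul_inv_cancel₀ (Nat.cast_ne_zero.mpr (by omega : 2 * k + 2 ≠ 0)), map_one]
      have hdvd : Stmt17Aux.Pk k ∣ X 0 * (X 2 * (X 1 ^ (2 * k + 1) * v 1)) := by
        refine ⟨C (((2 * k + 2 : ℕ) : ℂ))⁻¹ * (-(X 2 * v 0 + X 0 * v 2)), ?_⟩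
        linear_combination (C (((2 * k + 2 : ℕ) : ℂ))⁻¹) * hvjac
          - (v 1 * (X 0 * (X 2 * X 1 ^ (2 * k + 1)))) * hc
      have hv1 : v 1 = 0 :=
        Stmt17Aux.homog_low_eq_zero k j (by omega) hvh1 (Stmt17Aux.Pk_dvd_cancel k hdvd)
      have hw2 : X 2 * v 0 + X 0 * v 2 = 0 := by
        have hw : Stmt17Aux.Pk k * (X 2 * v 0 + X 0 * v 2) = 0 := by
          linear_combination hvjac
            - (((2 * k + 2 : ℕ) : MvPolynomial (Fin 3) ℂ)
                * (X 0 * (X 2 * X 1 ^ (2 * k + 1)))) * hv1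
        rcases mul_eq_zero.mp hw with h | h
        · exact absurd h (Stmt17Aux.Pk_ne k)
        · exact h
      have hrp : IsRelPrime (X 0 : MvPolynomial (Fin 3) ℂ) (X 2) := by
        apply ((Stmt17Aux.prime_X3 0).irreducible.isRelPrime_iff_not_dvd).mpr
        rw [Stmt17Aux.X_dvd_iff_az]
        have haz : Stmt17Aux.az 0 (X 2 : MvPolynomial (Fin 3) ℂ) = X 2 := by
          rw [Stmt17Aux.az, aeval_X, if_neg (by decide)]
        rw [haz]
        exact X_ne_zero 2
      obtain ⟨h, hh⟩ : X 0 ∣ v 0 :=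
        hrp.dvd_of_dvd_mul_left ⟨-(v 2), by linear_combination hw2⟩
      have hv2 : v 2 = -(X 2 * h) := by
        have h0 : X 0 * (X 2 * h + v 2) = 0 := by linear_combination hw2 - X 2 * hh
        rcases mul_eq_zero.mp h0 with h' | h'
        · exact absurd h' (X_ne_zero 0)
        · linear_combination h'
      have hhomh : IsHomogeneous h (j - 1) := by
        apply Stmt17Aux.isHomog_of_X_mul (i := 0)
        have e : j - 1 + 1 = j := by omega
        rw [e, ← hh]
        exact hvh0
      have hE : X 0 * pderiv 0 h - X 2 * pderiv 2 h = 0 := by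
        rw [hh, hv1, hv2] at hvdiv
        rw [pderiv_mul, pderiv_X_self, map_neg, pderiv_mul, pderiv_X_self, map_zero] at hvdiv
        linear_combination hvdiv
      have hspan : h ∈ Submodule.span ℂ
          (Set.range (fun α : Fin ((j + 1) / 2) => Stmt17Aux.gg j (α : ℕ))) := by
        rw [h.as_sum]
        apply Submodule.sum_mem
        intro dd hdd
        have hcd : coeff dd h ≠ 0 := MvPolynomial.mem_support_iff.mp hdd
        have hdeg : dd 0 + dd 1 + dd 2 = j - 1 :=
          (Stmt17Aux.isHomog_iff' h (j - 1)).mp hhomh dd hcd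
        have h02 : dd 0 = dd 2 := by
          have hco := congrArg (coeff dd) hE
          rw [coeff_sub, Stmt17Aux.coeff_Xmul_pderiv, Stmt17Aux.coeff_Xmul_pderiv,
            coeff_zero, sub_eq_zero] at hco
          exact_mod_cast mul_left_cancel₀ hcd hco
        have hlt : dd 0 < (j + 1) / 2 := by omega
        have hee : Stmt17Aux.ee j (dd 0) = dd := by
          rw [Stmt17Aux.ee]
          have e1 : j - 1 - 2 * dd 0 = dd 1 := by omega
          rw [e1]
          nth_rewrite 2 [h02]
          exact Stmt17Aux.finsupp3_eq dd
        have heq : Stmt17Aux.gg j (dd 0) = monomial dd 1 := by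
          rw [Stmt17Aux.gg, hee]
        have hmono : monomial dd (coeff dd h)
            = coeff dd h • Stmt17Aux.gg j ((⟨dd 0, hlt⟩ : Fin ((j + 1) / 2)) : ℕ) := by
          rw [heq, smul_monomial, smul_eq_mul, mul_one]
        rw [hmono]
        exact Submodule.smul_mem _ _ (Submodule.subset_span ⟨⟨dd 0, hlt⟩, rfl⟩)
      have hveq : v = Stmt17Aux.Phi h := by
        funext i
        fin_cases i
        · simpa using hh
        · simpa using hv1
        · simpa using hv2
      rw [hveq]
      have hmap : Stmt17Aux.Phi h ∈ Submodule.map Stmt17Aux.Phi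
          (Submodule.span ℂ (Set.range (fun α : Fin ((j + 1) / 2) => Stmt17Aux.gg j (α : ℕ)))) :=
        Submodule.mem_map_of_mem hspan
      rw [Submodule.map_span, ← Set.range_comp] at hmap
      exact hmap
    · rw [Submodule.span_le]
      rintro w ⟨α, rfl⟩
      exact hGmem α
  have hinj : Function.Injective
      (fun α : Fin ((j + 1) / 2) => Finsupp.single (0 : Fin 3) 1 + Stmt17Aux.ee j (α : ℕ)) := by
    intro a b hab
    have h1 := DFunLike.congr_fun hab 0
    rw [Finsupp.add_apply, Finsupp.add_apply, Stmt17Aux.ee_apply0, Stmt17Aux.ee_apply0] at h1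
    have : (a : ℕ) = (b : ℕ) := by omega
    exact Fin.ext this
  have hli0 : LinearIndependent ℂ (fun α : Fin ((j + 1) / 2) =>
      (monomial (Finsupp.single (0 : Fin 3) 1 + Stmt17Aux.ee j (α : ℕ)) (1 : ℂ))) := by
    have hb := (MvPolynomial.basisMonomials (Fin 3) ℂ).linearIndependent.comp _ hinj
    have hco : ⇑(MvPolynomial.basisMonomials (Fin 3) ℂ)
        ∘ (fun α : Fin ((j + 1) / 2) => Finsupp.single (0 : Fin 3) 1 + Stmt17Aux.ee j (α : ℕ))
        = fun α : Fin ((j + 1) / 2) =>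
            (monomial (Finsupp.single (0 : Fin 3) 1 + Stmt17Aux.ee j (α : ℕ)) (1 : ℂ)) := by
      funext α
      rw [Function.comp_apply, coe_basisMonomials]
    rwa [hco] at hb
  have hGli : LinearIndependent ℂ
      (fun α : Fin ((j + 1) / 2) => Stmt17Aux.Phi (Stmt17Aux.gg j (α : ℕ))) := by
    apply LinearIndependent.of_comp
      (LinearMap.proj (0 : Fin 3) : (Fin 3 → MvPolynomial (Fin 3) ℂ) →ₗ[ℂ] MvPolynomial (Fin 3) ℂ)
    have hco : (⇑(LinearMap.proj (0 : Fin 3) :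
          (Fin 3 → MvPolynomial (Fin 3) ℂ) →ₗ[ℂ] MvPolynomial (Fin 3) ℂ))
        ∘ (fun α : Fin ((j + 1) / 2) => Stmt17Aux.Phi (Stmt17Aux.gg j (α : ℕ)))
        = fun α : Fin ((j + 1) / 2) =>
            (monomial (Finsupp.single (0 : Fin 3) 1 + Stmt17Aux.ee j (α : ℕ)) (1 : ℂ)) := by
      funext α
      show Stmt17Aux.Phi (Stmt17Aux.gg j (α : ℕ)) 0 = _
      rw [Stmt17Aux.Phi_0, Stmt17Aux.gg, Stmt17Aux.X_mul_monomial3]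
    rw [hco]
    exact hli0
  rw [hVspan, finrank_span_eq_card hGli, Fintype.card_fin]
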